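/- If a symmetric positive definite matrix H₀ = γI is updated c times by BFGS updates with pairs (sᵏ, qᵏ) satisfying sᵏ ≠ 0, ⟨sᵏ, qᵏ⟩ > 0, and ‖qᵏ‖²/⟨qᵏ, sᵏ⟩ ≤ K, then the resulting matrix Hᶜ satisfies ‖Hᶜ‖ ≤ Tr(Hᶜ) ≤ γ d + c K (operator norm). -/

import Mathlib

open Matrix

private lemma trace_vecMulVec' {d : ℕ} (w v : Fin d → ℝ) :
    (vecMulVec w v).trace = w ⬝ᵥ v := by
  simp [Matrix.trace, vecMulVec_apply, dotProduct, Matrix.diag]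

private lemma entry_sq_le {d : ℕ} {A : Matrix (Fin d) (Fin d) ℝ} (h : A.PosSemidef)
    (i j : Fin d) : (A i j)^2 ≤ A i i * A j j := by
  have hsym : A j i = A i j := by
    have := congrFun (congrFun h.1.eq i) j
    simpa using this
  have hq : ∀ t : ℝ, 0 ≤ A i i * (t * t) + (2 * A i j) * t + A j j := by
    intro t
    have h0 := h.dotProduct_mulVec_nonneg (t • (Pi.single i 1 : Fin d → ℝ) + Pi.single j 1)
    simp only [star_trivial] at h0
    calc (0:ℝ) ≤ _ := h0
    _ = A i i * (t * t) + (2 * A i j) * t + A j j := by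
        simp [dotProduct, mulVec, Pi.single_apply, mul_add, add_mul,
          Finset.mul_sum, Finset.sum_add_distrib, hsym]
        ring
  have := discrim_le_zero hq
  rw [discrim] at this
  nlinarith

private lemma diag_nonneg' {d : ℕ} {A : Matrix (Fin d) (Fin d) ℝ} (h : A.PosSemidef)
    (i : Fin d) : 0 ≤ A i i := by
  have h0 := h.dotProduct_mulVec_nonneg (Pi.single i 1 : Fin d → ℝ)
  simp only [star_trivial] at h0
  calc (0:ℝ) ≤ _ := h0
  _ = A i i := by simp [dotProduct, mulVec, Pi.single_apply]

private lemma psd_norm_le_trace {d : ℕ} {A : Matrix (Fin d) (Fin d) ℝ} (h : A.PosSemidef) :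
    ‖Matrix.toEuclideanCLM (𝕜 := ℝ) A‖ ≤ A.trace := by
  have hentry := entry_sq_le h
  have hdiag := diag_nonneg' h
  have htr : 0 ≤ A.trace := Finset.sum_nonneg fun i _ => hdiag i
  apply ContinuousLinearMap.opNorm_le_bound _ htr
  intro x
  set y : Fin d → ℝ := WithLp.equiv 2 (Fin d → ℝ) x with hy
  have hx : x = (WithLp.equiv 2 (Fin d → ℝ)).symm y := rfl
  rw [hx, show toEuclideanCLM (𝕜 := ℝ) A ((WithLp.equiv 2 (Fin d → ℝ)).symm y) = (WithLp.equiv 2 (Fin d → ℝ)).symm (A *ᵥ y) from rfl]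
  have hnx : ‖x‖^2 = ∑ j, (y j)^2 := by
    rw [EuclideanSpace.norm_eq, Real.sq_sqrt (Finset.sum_nonneg fun i _ => sq_nonneg _)]
    simp only [Real.norm_eq_abs, sq_abs]
    rfl
  have key : ∑ i, ((A *ᵥ y) i)^2 ≤ (A.trace * ‖x‖)^2 := by
    have step1 : ∀ i, ((A *ᵥ y) i)^2 ≤ (∑ j, (A i j)^2) * ∑ j, (y j)^2 := by
      intro i
      simpa [mulVec, dotProduct] using
        Finset.sum_mul_sq_le_sq_mul_sq Finset.univ (fun j => A i j) y
    calc ∑ i, ((A *ᵥ y) i)^2 ≤ ∑ i, (∑ j, (A i j)^2) * ∑ j, (y j)^2 :=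
          Finset.sum_le_sum fun i _ => step1 i
      _ = (∑ i, ∑ j, (A i j)^2) * ∑ j, (y j)^2 := by rw [Finset.sum_mul]
      _ ≤ (∑ i, ∑ j, A i i * A j j) * ∑ j, (y j)^2 := by
          apply mul_le_mul_of_nonneg_right _ (Finset.sum_nonneg fun j _ => sq_nonneg _)
          exact Finset.sum_le_sum fun i _ => Finset.sum_le_sum fun j _ => hentry i j
      _ = (A.trace * ‖x‖)^2 := by
          rw [mul_pow, hnx]
          congr 1
          simp [Matrix.trace, Matrix.diag, sq, Finset.sum_mul, Finset.mul_sum]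
          rw [Finset.sum_comm]
  have hnorm : ‖(WithLp.equiv 2 (Fin d → ℝ)).symm (A *ᵥ y)‖^2 = ∑ i, ((A *ᵥ y) i)^2 := by
    rw [EuclideanSpace.norm_eq, Real.sq_sqrt (Finset.sum_nonneg fun i _ => sq_nonneg _)]
    simp only [Real.norm_eq_abs, sq_abs]
    rfl
  calc ‖(WithLp.equiv 2 (Fin d → ℝ)).symm (A *ᵥ y)‖
      = Real.sqrt (‖(WithLp.equiv 2 (Fin d → ℝ)).symm (A *ᵥ y)‖^2) :=
        (Real.sqrt_sq (norm_nonneg _)).symm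
    _ ≤ Real.sqrt ((A.trace * ‖x‖)^2) := Real.sqrt_le_sqrt (by rw [hnorm]; exact key)
    _ = A.trace * ‖x‖ := Real.sqrt_sq (mul_nonneg htr (norm_nonneg _))

theorem lbfgs_trace_bound
    {d : ℕ} (c : ℕ) (γ K : ℝ) (hγ : 0 < γ)
    (H : ℕ → Matrix (Fin d) (Fin d) ℝ)
    (s q : ℕ → (Fin d → ℝ))
    (hH0 : H 0 = γ • (1 : Matrix (Fin d) (Fin d) ℝ))
    (hs : ∀ u, u < c → s u ≠ 0)
    (hsq : ∀ u, u < c → 0 < s u ⬝ᵥ q u)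
    (hK : ∀ u, u < c → (q u ⬝ᵥ q u) / (s u ⬝ᵥ q u) ≤ K)
    (hrec : ∀ u, u < c → H (u + 1) = H u
        - (s u ⬝ᵥ (H u).mulVec (s u))⁻¹ •
            vecMulVec ((H u).mulVec (s u)) (vecMul (s u) (H u))
        + (s u ⬝ᵥ q u)⁻¹ • vecMulVec (q u) (q u))
    (hpd : ∀ u, u ≤ c → (H u).PosDef) :
    ‖Matrix.toEuclideanCLM (𝕜 := ℝ) (H c)‖ ≤ (H c).trace
      ∧ (H c).trace ≤ γ * d + c * K := by
  have htrace : ∀ u, u ≤ c → (H u).trace ≤ γ * d + u * K := by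
    intro u
    induction u with
    | zero =>
      intro _
      rw [hH0]
      simp [Matrix.trace_smul, Matrix.trace_one]
    | succ u ih =>
      intro hu
      have huc : u < c := Nat.lt_of_succ_le hu
      have ih' := ih (Nat.le_of_lt huc)
      have hpdu := hpd u (Nat.le_of_lt huc)
      have hsHs : 0 < s u ⬝ᵥ (H u).mulVec (s u) := by
        have := hpdu.dotProduct_mulVec_pos (hs u huc)
        simpa using this
      have hvm : vecMul (s u) (H u) = (H u).mulVec (s u) := by
        rw [← Matrix.mulVec_transpose]
        have : (H u)ᵀ = H u := by simpa using hpdu.1.eq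
        rw [this]
      have hv : 0 ≤ ((H u).mulVec (s u)) ⬝ᵥ ((H u).mulVec (s u)) :=
        Finset.sum_nonneg fun i _ => mul_self_nonneg _
      have hmid : 0 ≤ (s u ⬝ᵥ (H u).mulVec (s u))⁻¹ *
          (((H u).mulVec (s u)) ⬝ᵥ ((H u).mulVec (s u))) :=
        mul_nonneg (inv_nonneg.2 hsHs.le) hv
      have hqq : (s u ⬝ᵥ q u)⁻¹ * (q u ⬝ᵥ q u) ≤ K := by
        rw [inv_mul_eq_div]
        exact hK u huc
      have htr : (H (u + 1)).trace = (H u).trace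
          - (s u ⬝ᵥ (H u).mulVec (s u))⁻¹ *
              (((H u).mulVec (s u)) ⬝ᵥ ((H u).mulVec (s u)))
          + (s u ⬝ᵥ q u)⁻¹ * (q u ⬝ᵥ q u) := by
        rw [hrec u huc, Matrix.trace_add, Matrix.trace_sub, Matrix.trace_smul,
          Matrix.trace_smul, trace_vecMulVec', trace_vecMulVec', hvm]
        simp [smul_eq_mul]
      rw [htr]
      have : (↑(u + 1) : ℝ) * K = ↑u * K + K := by push_cast; ring
      rw [this]
      linarith
  refine ⟨psd_norm_le_trace (hpd c le_rfl).posSemidef, htrace c le_rfl⟩
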